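/- Let f : ℝ → ℂ be a Schwartz function, b ∈ ℝ, and a > 0. Then for every a′ > 0 the principal value defining W₁(a′,b) exists, and the function a′ ↦ W₁(a′,b) is differentiable at a with derivative ∂W₁/∂a (a,b) = −(3/(2π a²))·∫_ℝ f(t)·e^{3πi(t−b)/a} dt. -/

import Mathlib

open Real Complex MeasureTheory Filter Set
noncomputable section
namespace W1Aux
variable (f : SchwartzMap ℝ ℂ) (b : ℝ)
def g (a' t : ℝ) : ℂ := f t * Complex.exp (3 * Real.pi * Complex.I * (t - b) / a')
def K (a' t : ℝ) : ℂ :=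
  (g f b a' t - Set.indicator (Metric.closedBall b 1) (fun _ => f b) t) / ((t : ℂ) - b)

lemma norm_exp_eq_one (a' t : ℝ) :
    ‖Complex.exp (3 * Real.pi * Complex.I * ((t : ℂ) - b) / a')‖ = 1 := by
  have h : (3 * Real.pi * Complex.I * ((t : ℂ) - b) / a')
      = ((3 * Real.pi * (t - b) / a' : ℝ) : ℂ) * Complex.I := by push_cast; ring
  rw [h, Complex.norm_exp_ofReal_mul_I]
lemma g_self (a' : ℝ) : g f b a' b = f b := by simp [g]
lemma norm_g (a' t : ℝ) : ‖g f b a' t‖ = ‖f t‖ := by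
  rw [g, norm_mul, norm_exp_eq_one, mul_one]
lemma measurable_g (a' : ℝ) : Measurable (g f b a') := by
  apply Continuous.measurable
  exact f.continuous.mul (Complex.continuous_exp.comp (by fun_prop))
lemma measurable_K (a' : ℝ) : Measurable (K f b a') := by
  apply Measurable.div
  · exact (measurable_g f b a').sub (measurable_const.indicator measurableSet_closedBall)
  · exact (Complex.measurable_ofReal.sub measurable_const)
lemma hasDerivAt_g (a' t : ℝ) :
    HasDerivAt (g f b a')
      (deriv f t * Complex.exp (3 * Real.pi * Complex.I * ((t : ℂ) - b) / a')
        + f t * (Complex.exp (3 * Real.pi * Complex.I * ((t : ℂ) - b) / a')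
            * (3 * Real.pi * Complex.I / a'))) t := by
  have he : HasDerivAt (fun z : ℂ => Complex.exp (3 * Real.pi * Complex.I * (z - b) / a'))
      (Complex.exp (3 * Real.pi * Complex.I * ((t : ℂ) - b) / a') * (3 * Real.pi * Complex.I / a'))
      (t : ℂ) := by
    have := ((((hasDerivAt_id ((t : ℝ) : ℂ)).sub_const (b : ℂ)).const_mul
      (3 * Real.pi * Complex.I)).div_const (a' : ℂ)).cexp
    simpa using this
  have hf : HasDerivAt (fun s : ℝ => (f s : ℂ)) (deriv f t) t :=
    (f.differentiable.differentiableAt).hasDerivAt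
  exact hf.mul he.comp_ofReal

lemma g_lip (a' : ℝ) (ha' : 0 < a') :
    ∃ L : ℝ, 0 ≤ L ∧ ∀ t : ℝ, ‖g f b a' t - f b‖ ≤ L * |t - b| := by
  obtain ⟨M₀, hM₀⟩ : ∃ M, ∀ x : ℝ, ‖f x‖ ≤ M :=
    ⟨_, fun x => SchwartzMap.norm_le_seminorm ℝ f x⟩
  obtain ⟨M₁, hM₁⟩ : ∃ M, ∀ x : ℝ, ‖deriv f x‖ ≤ M := by
    refine ⟨SchwartzMap.seminorm ℝ 0 0 (SchwartzMap.derivCLM ℝ ℂ f), fun x => ?_⟩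
    have := SchwartzMap.norm_le_seminorm ℝ (SchwartzMap.derivCLM ℝ ℂ f) x
    rwa [SchwartzMap.derivCLM_apply] at this
  have h0 : (0:ℝ) ≤ M₀ := le_trans (norm_nonneg _) (hM₀ 0)
  have h1 : (0:ℝ) ≤ M₁ := le_trans (norm_nonneg _) (hM₁ 0)
  set L : ℝ := M₁ + M₀ * (3 * Real.pi / a') with hL
  have hLnn : 0 ≤ L := by positivity
  refine ⟨L, hLnn, fun t => ?_⟩
  have key : ∀ x : ℝ, ‖deriv f x * Complex.exp (3 * Real.pi * Complex.I * ((x : ℂ) - b) / a')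
        + f x * (Complex.exp (3 * Real.pi * Complex.I * ((x : ℂ) - b) / a')
            * (3 * Real.pi * Complex.I / a'))‖ ≤ L := by
    intro x
    have hnc : ‖(3 * (Real.pi:ℂ) * Complex.I / a')‖ = 3 * Real.pi / a' := by
      rw [norm_div, norm_mul, norm_mul]
      simp [abs_of_pos Real.pi_pos, abs_of_pos ha']
    calc ‖_ + _‖ ≤ ‖deriv f x * Complex.exp (3 * Real.pi * Complex.I * ((x : ℂ) - b) / a')‖
          + ‖f x * (Complex.exp (3 * Real.pi * Complex.I * ((x : ℂ) - b) / a')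
            * (3 * Real.pi * Complex.I / a'))‖ := norm_add_le _ _
      _ ≤ M₁ + M₀ * (3 * Real.pi / a') := by
          rw [norm_mul, norm_exp_eq_one, mul_one, norm_mul, norm_mul, norm_exp_eq_one, one_mul,
            hnc]
          gcongr
          · exact hM₁ x
          · exact hM₀ x
  have := Convex.norm_image_sub_le_of_norm_hasDerivWithin_le
    (f := g f b a') (f' := fun x => deriv f x * Complex.exp (3 * Real.pi * Complex.I * ((x : ℂ) - b) / a')
        + f x * (Complex.exp (3 * Real.pi * Complex.I * ((x : ℂ) - b) / a')
            * (3 * Real.pi * Complex.I / a'))) (s := Set.univ)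
    (fun x _ => (hasDerivAt_g f b a' x).hasDerivWithinAt)
    (fun x _ => key x) convex_univ (mem_univ b) (mem_univ t)
  rw [g_self] at this
  simpa [Real.norm_eq_abs] using this

lemma norm_ofReal_sub (t : ℝ) : ‖(t:ℂ) - b‖ = |t - b| := by
  rw [show (t:ℂ) - b = ((t - b : ℝ) : ℂ) by push_cast; ring, Complex.norm_real,
    Real.norm_eq_abs]

lemma integrable_K (a' : ℝ) (ha' : 0 < a') : Integrable (K f b a') := by
  obtain ⟨L, hL0, hL⟩ := g_lip f b a' ha'
  have hmeas : AEStronglyMeasurable (K f b a') volume := (measurable_K f b a').aestronglyMeasurable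
  have h1 : IntegrableOn (K f b a') (Metric.closedBall b 1) := by
    refine Integrable.mono' (g := fun _ => L)
      (integrableOn_const measure_closedBall_lt_top.ne) hmeas.restrict ?_
    refine (ae_restrict_iff' measurableSet_closedBall).mpr (ae_of_all _ fun t ht => ?_)
    rw [K, indicator_of_mem ht]
    rcases eq_or_ne t b with rfl | hne
    · simp [g_self, hL0]
    · have hpos : 0 < |t - b| := by
        simp [abs_pos, sub_ne_zero, hne]
      rw [norm_div, norm_ofReal_sub, div_le_iff₀ hpos]
      exact hL t
  have h2 : IntegrableOn (K f b a') (Metric.closedBall b 1)ᶜ := by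
    refine Integrable.mono' (f.integrable.norm.restrict) hmeas.restrict ?_
    refine (ae_restrict_iff' measurableSet_closedBall.compl).mpr (ae_of_all _ fun t ht => ?_)
    have h1t : 1 < |t - b| := by
      simpa [Metric.mem_closedBall, Real.dist_eq, not_le] using ht
    rw [K, indicator_of_notMem ht, sub_zero, norm_div, norm_ofReal_sub, norm_g]
    exact div_le_self (norm_nonneg _) h1t.le
  have : IntegrableOn (K f b a') (Metric.closedBall b 1 ∪ (Metric.closedBall b 1)ᶜ) :=
    h1.union h2
  rwa [union_compl_self, integrableOn_univ] at this


lemma odd_int (ε : ℝ) :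
    ∫ t in ({t : ℝ | ε ≤ |t - b|} ∩ Metric.closedBall b 1), ((t:ℂ) - b)⁻¹ = 0 := by
  have hT : MeasurableSet ({t : ℝ | ε ≤ |t - b|} ∩ Metric.closedBall b 1) :=
    (measurableSet_le measurable_const (measurable_id.sub_const b).abs).inter
      measurableSet_closedBall
  set ψ : ℝ → ℂ := Set.indicator {s : ℝ | ε ≤ |s| ∧ |s| ≤ 1} (fun s => ((s:ℂ))⁻¹) with hψ
  have h1 : ∀ s : ℝ,
      (({t : ℝ | ε ≤ |t - b|} ∩ Metric.closedBall b 1)).indicator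
        (fun t : ℝ => ((t:ℂ) - b)⁻¹) (s + b) = ψ s := by
    intro s
    have hmem : (s + b) ∈ ({t : ℝ | ε ≤ |t - b|} ∩ Metric.closedBall b 1)
        ↔ s ∈ {s : ℝ | ε ≤ |s| ∧ |s| ≤ 1} := by
      simp [Metric.mem_closedBall, Real.dist_eq, mem_setOf_eq, add_sub_cancel_right]
    have hval : ((s + b : ℝ) : ℂ) - b = (s : ℂ) := by push_cast; ring
    by_cases h : (s + b) ∈ ({t : ℝ | ε ≤ |t - b|} ∩ Metric.closedBall b 1)
    · rw [indicator_of_mem h, hψ, indicator_of_mem (hmem.mp h), hval]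
    · rw [indicator_of_notMem h, hψ, indicator_of_notMem (fun hc => h (hmem.mpr hc))]
  have h2 : ∀ s : ℝ, ψ (-s) = - ψ s := by
    intro s
    have hmem : (-s) ∈ {s : ℝ | ε ≤ |s| ∧ |s| ≤ 1} ↔ s ∈ {s : ℝ | ε ≤ |s| ∧ |s| ≤ 1} := by
      simp [mem_setOf_eq, abs_neg]
    by_cases h : s ∈ {s : ℝ | ε ≤ |s| ∧ |s| ≤ 1}
    · rw [hψ, indicator_of_mem (hmem.mpr h), indicator_of_mem h]
      push_cast
      rw [inv_neg]
    · rw [hψ, indicator_of_notMem (fun hc => h (hmem.mp hc)), indicator_of_notMem h, neg_zero]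
  have h3 : ∫ s : ℝ, ψ s = - ∫ s : ℝ, ψ s := by
    conv_lhs => rw [← integral_neg_eq_self ψ volume]
    simp_rw [h2]
    rw [integral_neg]
  have h4 : ∫ s : ℝ, ψ s = 0 := by
    have := eq_neg_iff_add_eq_zero.mp h3
    exact add_self_eq_zero.mp this
  calc ∫ t in ({t : ℝ | ε ≤ |t - b|} ∩ Metric.closedBall b 1), ((t:ℂ) - b)⁻¹
      = ∫ t : ℝ, (({t : ℝ | ε ≤ |t - b|} ∩ Metric.closedBall b 1)).indicator
          (fun t : ℝ => ((t:ℂ) - b)⁻¹) t := (integral_indicator hT).symm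
    _ = ∫ s : ℝ, (({t : ℝ | ε ≤ |t - b|} ∩ Metric.closedBall b 1)).indicator
          (fun t : ℝ => ((t:ℂ) - b)⁻¹) (s + b) := (integral_add_right_eq_self _ b).symm
    _ = ∫ s : ℝ, ψ s := by simp_rw [h1]
    _ = 0 := h4

lemma measurableSet_S (ε : ℝ) : MeasurableSet {t : ℝ | ε ≤ |t - b|} :=
  measurableSet_le measurable_const (measurable_id.sub_const b).abs

lemma pv_eq (a' ε : ℝ) (ha' : 0 < a') (hε : 0 < ε) :
    ∫ t in {t : ℝ | ε ≤ |t - b|}, g f b a' t / ((t:ℂ) - b)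
      = ∫ t in {t : ℝ | ε ≤ |t - b|}, K f b a' t := by
  set S := {t : ℝ | ε ≤ |t - b|} with hS
  have hSm : MeasurableSet S := measurableSet_S b ε
  set J : ℝ → ℂ := Set.indicator (Metric.closedBall b 1) (fun s : ℝ => f b * ((s:ℂ) - b)⁻¹)
    with hJ
  have hpt : ∀ t : ℝ, g f b a' t / ((t:ℂ) - b) = K f b a' t + J t := by
    intro t
    by_cases h : t ∈ Metric.closedBall b 1
    · rw [K, indicator_of_mem h, hJ, indicator_of_mem h]
      rcases eq_or_ne t b with rfl | hne
      · simp
      · have hz : ((t:ℂ) - b) ≠ 0 := sub_ne_zero.mpr (by exact_mod_cast hne)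
        field_simp
        ring
    · rw [K, indicator_of_notMem h, hJ, indicator_of_notMem h, sub_zero, add_zero]
  have hKint : IntegrableOn (K f b a') S := (integrable_K f b a' ha').integrableOn
  have hJint : IntegrableOn J S := by
    have hGint : Integrable ((Metric.closedBall b 1).indicator
        (fun _ : ℝ => ‖f b‖ * ε⁻¹)) := by
      rw [integrable_indicator_iff measurableSet_closedBall]
      exact integrableOn_const measure_closedBall_lt_top.ne
    refine Integrable.mono' hGint.restrict ?_ ?_
    · apply AEStronglyMeasurable.restrict
      exact ((measurable_const.mul ((Complex.measurable_ofReal.sub measurable_const).inv)).indicator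
        measurableSet_closedBall).aestronglyMeasurable
    · refine (ae_restrict_iff' hSm).mpr (ae_of_all _ fun t ht => ?_)
      have htε : ε ≤ |t - b| := ht
      by_cases h : t ∈ Metric.closedBall b 1
      · rw [hJ, indicator_of_mem h, indicator_of_mem h, norm_mul, norm_inv, norm_ofReal_sub]
        have h1 : |t - b|⁻¹ ≤ ε⁻¹ := by
          apply inv_anti₀ hε htε
        exact mul_le_mul_of_nonneg_left h1 (norm_nonneg _)
      · rw [hJ, indicator_of_notMem h, indicator_of_notMem h, norm_zero]
  calc ∫ t in S, g f b a' t / ((t:ℂ) - b) = ∫ t in S, (K f b a' t + J t) := by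
        simp_rw [hpt]
    _ = (∫ t in S, K f b a' t) + ∫ t in S, J t := integral_add hKint hJint
    _ = ∫ t in S, K f b a' t := by
        rw [hJ, setIntegral_indicator measurableSet_closedBall, integral_const_mul,
          odd_int b ε, mul_zero, add_zero]

lemma ae_ne_b : ∀ᵐ t : ℝ ∂volume, t ≠ b := by
  refine ae_iff.mpr ?_
  simp only [not_not, setOf_eq_eq_singleton]
  exact measure_singleton b

lemma tendsto_pv (a' : ℝ) (ha' : 0 < a') :
    Tendsto (fun ε : ℝ => ∫ t in {t : ℝ | ε ≤ |t - b|}, K f b a' t)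
      (nhdsWithin 0 (Ioi 0)) (nhds (∫ t : ℝ, K f b a' t)) := by
  have hK := integrable_K f b a' ha'
  have key : Tendsto (fun ε : ℝ => ∫ t : ℝ, ({t : ℝ | ε ≤ |t - b|}).indicator (K f b a') t)
      (nhdsWithin 0 (Ioi 0)) (nhds (∫ t : ℝ, K f b a' t)) := by
    apply tendsto_integral_filter_of_dominated_convergence (fun t => ‖K f b a' t‖)
    · exact Eventually.of_forall fun ε =>
        ((measurable_K f b a').indicator (measurableSet_S b ε)).aestronglyMeasurable
    · exact Eventually.of_forall fun ε => ae_of_all _ fun t => norm_indicator_le_norm_self _ _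
    · exact hK.norm
    · filter_upwards [ae_ne_b b] with t ht
      have hpos : 0 < |t - b| := by simp [abs_pos, sub_ne_zero, ht]
      have hev : ∀ᶠ ε in nhdsWithin (0:ℝ) (Ioi 0), ε < |t - b| :=
        Filter.Eventually.filter_mono nhdsWithin_le_nhds (gt_mem_nhds hpos)
      refine tendsto_const_nhds.congr' ?_
      filter_upwards [hev] with ε hε
      have hmem : t ∈ {t : ℝ | ε ≤ |t - b|} := by
        simp only [mem_setOf_eq]
        exact hε.le
      exact (indicator_of_mem hmem _).symm
  exact key.congr fun ε => integral_indicator (measurableSet_S b ε)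

lemma deriv_part (a : ℝ) (ha : 0 < a) :
    HasDerivAt (fun x : ℝ => ∫ t : ℝ, K f b x t)
      ((∫ t : ℝ, g f b a t) * (-(3 * Real.pi * Complex.I) / (a:ℂ) ^ 2)) a := by
  set F' : ℝ → ℝ → ℂ := fun x t => g f b x t * (-(3 * Real.pi * Complex.I) / (x:ℂ) ^ 2)
    with hF'
  have hball : ∀ x ∈ Metric.ball a (a / 2), a / 2 < x := by
    intro x hx
    rw [Metric.mem_ball, Real.dist_eq, abs_lt] at hx
    linarith [hx.1]
  have main := hasDerivAt_integral_of_dominated_loc_of_deriv_le (μ := volume)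
    (F := fun x t => K f b x t) (F' := F') (x₀ := a)
    (bound := fun t => ‖f t‖ * (12 * Real.pi / a ^ 2))
    (Metric.ball_mem_nhds a (half_pos ha))
    (Eventually.of_forall fun x => (measurable_K f b x).aestronglyMeasurable)
    (integrable_K f b a ha)
    (((measurable_g f b a).mul_const _).aestronglyMeasurable)
    ?_ ((f.integrable.norm).mul_const _) ?_
  · have : ∫ t : ℝ, F' a t = (∫ t : ℝ, g f b a t) * (-(3 * Real.pi * Complex.I) / (a:ℂ) ^ 2) := by
      rw [hF']
      exact integral_mul_const _ _
    rw [← this]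
    exact main.2
  · -- bound
    refine ae_of_all _ fun t => fun x hx => ?_
    have hx2 : a / 2 < x := hball x hx
    have hxpos : 0 < x := lt_trans (half_pos ha) hx2
    rw [hF', norm_mul, norm_g, norm_div, norm_neg]
    have h1 : ‖(3 * (Real.pi:ℂ) * Complex.I)‖ = 3 * Real.pi := by
      rw [norm_mul, norm_mul]
      simp [abs_of_pos Real.pi_pos]
    have h2 : ‖((x:ℂ)) ^ 2‖ = x ^ 2 := by
      rw [norm_pow]
      simp [abs_of_pos hxpos]
    rw [h1, h2]
    apply mul_le_mul_of_nonneg_left _ (norm_nonneg _)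
    have hq : a ^ 2 / 4 ≤ x ^ 2 := by nlinarith
    calc 3 * Real.pi / x ^ 2 ≤ 3 * Real.pi / (a ^ 2 / 4) := by
          apply div_le_div_of_nonneg_left (by positivity) (by positivity) hq
      _ = 12 * Real.pi / a ^ 2 := by ring
  · -- differentiability
    filter_upwards [ae_ne_b b] with t ht x hx
    have hx2 : a / 2 < x := hball x hx
    have hxpos : 0 < x := lt_trans (half_pos ha) hx2
    have hx0 : ((x:ℝ):ℂ) ≠ 0 := by exact_mod_cast hxpos.ne'
    have htb : ((t:ℂ) - b) ≠ 0 := sub_ne_zero.mpr (by exact_mod_cast ht)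
    set c : ℂ := Set.indicator (Metric.closedBall b 1) (fun _ => (f b : ℂ)) t with hc
    set w : ℂ := 3 * Real.pi * Complex.I * ((t:ℂ) - b) with hw
    have hfun : (fun x : ℝ => K f b x t)
        = fun x : ℝ => (f t * Complex.exp (w * ((x:ℝ):ℂ)⁻¹) - c) / ((t:ℂ) - b) := by
      funext y
      simp only [K, g, hc, hw, div_eq_mul_inv]
    have hd : HasDerivAt
        (fun z : ℂ => (f t * Complex.exp (w * z⁻¹) - c) / ((t:ℂ) - b))
        ((f t * (Complex.exp (w * ((x:ℝ):ℂ)⁻¹) * (w * -(((x:ℝ):ℂ) ^ 2)⁻¹))) / ((t:ℂ) - b))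
        ((x:ℝ):ℂ) := by
      exact ((((hasDerivAt_inv hx0).const_mul w).cexp.const_mul (f t : ℂ)).sub_const c).div_const _
    rw [hfun]
    have := hd.comp_ofReal
    convert this using 1
    · rfl
    simp only [hF', hw, g]
    field_simp

end W1Aux

end

open W1Aux in
/-- **Scale derivative of `W₁`.**
For a Schwartz function `f`, `b ∈ ℝ` and `a > 0`: the principal value
`W₁(a′,b) = −(i/(2π²))·PV∫ f(t)·e^{3πi(t−b)/a′}/(t−b) dt` exists for every `a′ > 0`,
and `a′ ↦ W₁(a′,b)` is differentiable at `a` with derivative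
`−(3/(2π a²))·∫ f(t)·e^{3πi(t−b)/a} dt`. -/
theorem hasDerivAt_W1_scale (f : SchwartzMap ℝ ℂ) (b : ℝ) (a : ℝ) (ha : 0 < a) :
    ∃ W₁ : ℝ → ℂ,
      (∀ a' : ℝ, 0 < a' →
        Tendsto (fun ε : ℝ =>
            -(Complex.I / (2 * (Real.pi : ℂ) ^ 2)) * ∫ t in {t : ℝ | ε ≤ |t - b|},
              f t * Complex.exp (3 * Real.pi * Complex.I * (t - b) / a') / ((t : ℂ) - b))
          (nhdsWithin 0 (Ioi 0)) (nhds (W₁ a'))) ∧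
      HasDerivAt W₁
        (-(3 / (2 * (Real.pi : ℂ) * a ^ 2)) *
          ∫ t : ℝ, f t * Complex.exp (3 * Real.pi * Complex.I * (t - b) / a)) a := by
  set cst : ℂ := -(Complex.I / (2 * (Real.pi : ℂ) ^ 2)) with hcst
  refine ⟨fun x => cst * ∫ t : ℝ, K f b x t, fun a' ha' => ?_, ?_⟩
  · have h := (tendsto_pv f b a' ha').const_mul cst
    refine h.congr' ?_
    filter_upwards [self_mem_nhdsWithin] with ε hε
    have hε' : (0:ℝ) < ε := hε
    have := pv_eq f b a' ε ha' hε'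
    rw [← this]
    rfl
  · have hd := (deriv_part f b a ha).const_mul cst
    convert hd using 1
    show -(3 / (2 * (Real.pi : ℂ) * (a:ℂ) ^ 2)) * (∫ t : ℝ, g f b a t)
        = cst * ((∫ t : ℝ, g f b a t) * (-(3 * Real.pi * Complex.I) / (a:ℂ) ^ 2))
    have hπ : ((Real.pi : ℝ) : ℂ) ≠ 0 := Complex.ofReal_ne_zero.mpr Real.pi_ne_zero
    have haC : ((a : ℝ) : ℂ) ≠ 0 := Complex.ofReal_ne_zero.mpr ha.ne'
    rw [hcst]
    field_simp
    ring_nf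
    simp [Complex.I_sq]
    rfl
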